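/- Let λ = (λ_1,...,λ_m) be a partition with λ_i > μ_i where μ = (μ_1,...,μ_m) satisfies 0 ≤ μ_1 ≤ ... ≤ μ_m < λ_m and μ_i ≥ i−1 for all i. Then the generalized Ferrers ideal I_{λ-μ} = (x_i y_j : μ_i < j ≤ λ_i) and its specialization \overline{I}_{λ-μ} (replacing y_j by x_j) have the same number of minimal monomial generators, namely λ_1 + ... + λ_m − (μ_1 + ... + μ_m). -/
import Mathlib


/-- (0-based indexing) let `λ` be a partition on `{0,…,m-1}` and
`μ 0 ≤ μ 1 ≤ … ≤ μ (m-1) < λ (m-1)` with `μ i ≥ i`.  The generalized Ferrers ideal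
`I_{λ-μ}` is generated by the `x_i y_j` with `μ i ≤ j < λ i`, and its specialization
replaces `y_j` by `x_j`, giving the monomials `x_i x_j` (exponent vector
`single i 1 + single j 1`).  Both have the same number of minimal monomial generators,
namely `∑ i (λ i − μ i)`; in particular the specialization map is injective on the
generators. -/
theorem specialization_generator_count {m n : ℕ}
    (hm : 0 < m) (hmn : m ≤ n)
    (lam mu : ℕ → ℕ)
    (hanti : ∀ i j : ℕ, i ≤ j → j < m → lam j ≤ lam i)
    (hbound : ∀ i : ℕ, i < m → lam i ≤ n)
    (hmu_mono : ∀ i j : ℕ, i ≤ j → j < m → mu i ≤ mu j)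
    (hmu_lt : mu (m - 1) < lam (m - 1))
    (hmu_ge : ∀ i : ℕ, i < m → i ≤ mu i)
    (S : Finset (ℕ × ℕ))
    (hS : S = ((Finset.range m) ×ˢ (Finset.range n)).filter
      (fun p => mu p.1 ≤ p.2 ∧ p.2 < lam p.1)) :
    S.card = ∑ i ∈ Finset.range m, (lam i - mu i) ∧
    (S.image fun p => Finsupp.single p.1 (1 : ℕ) + Finsupp.single p.2 1).card
      = ∑ i ∈ Finset.range m, (lam i - mu i) := by
  have hcard : S.card = ∑ i ∈ Finset.range m, (lam i - mu i) := by
    subst hS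
    rw [Finset.card_filter, Finset.sum_product]
    apply Finset.sum_congr rfl
    intro i hi
    rw [Finset.mem_range] at hi
    have : (Finset.range n).filter (fun j => mu i ≤ j ∧ j < lam i)
        = Finset.Ico (mu i) (lam i) := by
      ext j
      simp only [Finset.mem_filter, Finset.mem_range, Finset.mem_Ico]
      constructor
      · rintro ⟨_, h1, h2⟩; exact ⟨h1, h2⟩
      · rintro ⟨h1, h2⟩; exact ⟨lt_of_lt_of_le h2 (hbound i hi), h1, h2⟩
    rw [← Finset.card_filter, this, Nat.card_Ico]
  refine ⟨hcard, ?_⟩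
  rw [Finset.card_image_of_injOn, hcard]
  intro p hp q hq heq
  simp only [hS, Finset.coe_filter, Finset.mem_product, Finset.mem_range,
    Set.mem_setOf_eq] at hp hq
  dsimp only at heq
  have hp1 : p.1 ≤ p.2 := le_trans (hmu_ge p.1 hp.1.1) hp.2.1
  have hq1 : q.1 ≤ q.2 := le_trans (hmu_ge q.1 hq.1.1) hq.2.1
  rw [Finsupp.single_add_single_eq_single_add_single (one_ne_zero) (one_ne_zero)] at heq
  rcases heq with ⟨h1, h2⟩ | ⟨_, h1, h2⟩ | ⟨h0, _, _⟩
  · exact Prod.ext h1 h2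
  · exact Prod.ext (by omega) (by omega)
  · exact absurd h0 (by omega)
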